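/- Let n ∈ ℝ^N be a unit vector, η ∈ (0,1), and let G : ℝ^N → [0,∞) be measurable such that G and h(G−1) are integrable against (v·n)₊ M(v) dv and Λ_n(G) > 0. Then Λ_n(G) · ∫_{ℝ^N} 1_{ |G(v)/Λ_n(G) − 1| > η } · min( (v·n)₊², 1 ) M(v) dv ≤ (1/(√(2π) h(η))) ( Λ_n(h(G−1)) − h(Λ_n(G) − 1) ). -/

import Mathlib

open MeasureTheory Real Set
open scoped RealInnerProductSpace

/-- The standard Gaussian density `M(v) = (2π)^{−N/2} exp(−|v|²/2)` on `ℝ^N`. -/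
noncomputable def gaussM {N : ℕ} (v : EuclideanSpace ℝ (Fin N)) : ℝ :=
  (2 * π) ^ (-(N : ℝ) / 2) * Real.exp (-‖v‖ ^ 2 / 2)

/-- The relative-entropy integrand `h(z) = (1+z)·log(1+z) − z`
(with the convention `h(−1) = 1`, which holds here since `Real.log 0 = 0`). -/
noncomputable def entH (z : ℝ) : ℝ := (1 + z) * Real.log (1 + z) - z

/-- The boundary average `Λ_n(φ) = √(2π) ∫ φ(v)(v·n)₊ M(v) dv`. -/
noncomputable def Lam {N : ℕ} (n : EuclideanSpace ℝ (Fin N))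
    (φ : EuclideanSpace ℝ (Fin N) → ℝ) : ℝ :=
  Real.sqrt (2 * π) * ∫ v, φ v * max ⟪v, n⟫ 0 * gaussM v

/-! ### Auxiliary lemmas about `entH` -/

lemma continuous_entH : Continuous entH := by
  have : Continuous fun z : ℝ => (1 + z) * Real.log (1 + z) :=
    Real.continuous_mul_log.comp (continuous_const.add continuous_id)
  exact this.sub continuous_id

lemma hasDerivAt_entH {z : ℝ} (hz : -1 < z) : HasDerivAt entH (Real.log (1 + z)) z := by
  have h0 : (0 : ℝ) < 1 + z := by linarith
  have h1 : HasDerivAt (fun z : ℝ => 1 + z) 1 z := (hasDerivAt_id z).const_add 1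
  have h2 : HasDerivAt (fun z : ℝ => Real.log (1 + z)) (1 / (1 + z)) z := by
    simpa using h1.log (ne_of_gt h0)
  have h3 := (h1.mul h2).sub (hasDerivAt_id z)
  have : 1 * Real.log (1 + z) + (1 + z) * (1 / (1 + z)) - 1 = Real.log (1 + z) := by
    rw [mul_one_div, div_self (ne_of_gt h0)]; ring
  rw [this] at h3
  exact h3

lemma entH_nonneg {z : ℝ} (hz : -1 ≤ z) : 0 ≤ entH z := by
  rcases eq_or_lt_of_le hz with h | h
  · rw [← h]; norm_num [entH]
  · have h0 : (0 : ℝ) < 1 + z := by linarith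
    have h1 := Real.log_le_sub_one_of_pos (inv_pos.2 h0)
    rw [Real.log_inv] at h1
    have h2 : 1 - (1 + z)⁻¹ ≤ Real.log (1 + z) := by linarith
    have h3 : (1 + z) * (1 - (1 + z)⁻¹) ≤ (1 + z) * Real.log (1 + z) :=
      mul_le_mul_of_nonneg_left h2 h0.le
    have h4 : (1 + z) * (1 - (1 + z)⁻¹) = z := by field_simp; ring
    have : z ≤ (1 + z) * Real.log (1 + z) := by linarith
    simpa [entH] using by linarith

lemma entH_pos {z : ℝ} (h0 : 0 < z) : 0 < entH z := by
  have hz0 : (0 : ℝ) < 1 + z := by linarith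
  have hne : (1 + z)⁻¹ ≠ 1 := by
    intro h
    have : (1 : ℝ) + z = 1 := by
      field_simp at h; linarith
    linarith
  have h1 := Real.log_lt_sub_one_of_pos (inv_pos.2 hz0) hne
  rw [Real.log_inv] at h1
  have h2 : 1 - (1 + z)⁻¹ < Real.log (1 + z) := by linarith
  have h3 : (1 + z) * (1 - (1 + z)⁻¹) < (1 + z) * Real.log (1 + z) :=
    (mul_lt_mul_iff_right₀ hz0).2 h2
  have h4 : (1 + z) * (1 - (1 + z)⁻¹) = z := by field_simp; ring
  have : z < (1 + z) * Real.log (1 + z) := by linarith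
  simp only [entH]; linarith

lemma entH_monotoneOn : MonotoneOn entH (Ici (0 : ℝ)) := by
  apply monotoneOn_of_deriv_nonneg (convex_Ici 0) continuous_entH.continuousOn
  · intro x hx
    rw [interior_Ici] at hx
    exact (hasDerivAt_entH (by linarith [mem_Ioi.mp hx] : (-1 : ℝ) < x)).differentiableAt.differentiableWithinAt
  · intro x hx
    rw [interior_Ici] at hx
    rw [(hasDerivAt_entH (by linarith [mem_Ioi.mp hx] : (-1 : ℝ) < x)).deriv]
    exact Real.log_nonneg (by linarith [mem_Ioi.mp hx])

lemma entH_antitoneOn : AntitoneOn entH (Icc (-1 : ℝ) 0) := by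
  apply antitoneOn_of_deriv_nonpos (convex_Icc _ _) continuous_entH.continuousOn
  · intro x hx
    rw [interior_Icc] at hx
    exact (hasDerivAt_entH hx.1).differentiableAt.differentiableWithinAt
  · intro x hx
    rw [interior_Icc] at hx
    rw [(hasDerivAt_entH hx.1).deriv]
    exact Real.log_nonpos (by linarith [hx.1]) (by linarith [hx.2])

lemma entH_neg_ge {t : ℝ} (ht : t ∈ Set.Ioo (0 : ℝ) 1) : entH t ≤ entH (-t) := by
  set g : ℝ → ℝ := fun t => entH (-t) - entH t with hg
  have hgd : ∀ t ∈ Set.Ioo (0 : ℝ) 1,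
      HasDerivAt g (Real.log (1 + -t) * -1 - Real.log (1 + t)) t := by
    intro t ht
    have h1 : HasDerivAt (fun t : ℝ => entH (-t)) (Real.log (1 + -t) * -1) t :=
      HasDerivAt.comp t (hasDerivAt_entH (by nlinarith [ht.1, ht.2] : (-1 : ℝ) < -t))
        (hasDerivAt_neg t)
    exact h1.sub (hasDerivAt_entH (by linarith [ht.1] : (-1 : ℝ) < t))
  have hmono : MonotoneOn g (Icc (0 : ℝ) t) := by
    apply monotoneOn_of_deriv_nonneg (convex_Icc _ _)
    · exact ((continuous_entH.comp continuous_neg).sub continuous_entH).continuousOn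
    · intro x hx
      rw [interior_Icc] at hx
      exact (hgd x ⟨hx.1, lt_trans hx.2 ht.2⟩).differentiableAt.differentiableWithinAt
    · intro x hx
      rw [interior_Icc] at hx
      have hx' : x ∈ Set.Ioo (0 : ℝ) 1 := ⟨hx.1, lt_trans hx.2 ht.2⟩
      rw [(hgd x hx').deriv]
      have h1 : (0 : ℝ) < 1 - x := by linarith [hx'.2]
      have h2 : (0 : ℝ) < 1 + x := by linarith [hx'.1]
      have h3 : Real.log (1 - x) + Real.log (1 + x) ≤ 0 := by
        rw [← Real.log_mul (ne_of_gt h1) (ne_of_gt h2)]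
        exact Real.log_nonpos (by nlinarith) (by nlinarith [sq_nonneg x])
      have : (1 : ℝ) + -x = 1 - x := by ring
      rw [this]
      linarith
  have h0 : g 0 ≤ g t :=
    hmono (by constructor <;> norm_num [le_of_lt ht.1])
      ⟨ht.1.le, le_refl t⟩ ht.1.le
  have hg0 : g 0 = 0 := by simp [hg]
  have := hg0 ▸ h0
  simp only [hg] at this
  linarith

/-- If `-1 ≤ z` and `η < |z|` with `η ∈ (0,1)`, then `entH η ≤ entH z`. -/
lemma entH_ge_of_abs_gt {η z : ℝ} (hη : η ∈ Set.Ioo (0 : ℝ) 1) (hz : -1 ≤ z)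
    (h : η < |z|) : entH η ≤ entH z := by
  rcases le_or_gt 0 z with hz0 | hz0
  · rw [abs_of_nonneg hz0] at h
    exact entH_monotoneOn (mem_Ici.mpr hη.1.le) (mem_Ici.mpr (by linarith [hη.1])) h.le
  · rw [abs_of_neg hz0] at h
    have h1 : z ≤ -η := by linarith
    have h2 : entH (-η) ≤ entH z :=
      entH_antitoneOn ⟨hz, hz0.le⟩ ⟨by linarith [hη.2], by linarith [hη.1]⟩ h1
    exact le_trans (entH_neg_ge hη) h2

/-- The key scaling identity for `entH`. -/
lemma entH_scaling {lam g : ℝ} (hlam : 0 < lam) (hg : 0 ≤ g) :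
    lam * entH (g / lam - 1) = entH (g - 1) - g * Real.log lam - 1 + lam := by
  rcases eq_or_lt_of_le hg with h | h
  · rw [← h]
    simp [entH]
  · have h1 : (1 : ℝ) + (g / lam - 1) = g / lam := by ring
    have h2 : (1 : ℝ) + (g - 1) = g := by ring
    simp only [entH, h1, h2]
    rw [Real.log_div (ne_of_gt h) (ne_of_gt hlam)]
    field_simp
    ring

/-! ### 1D Gaussian computations -/

lemma continuous_gauss1d : Continuous fun t : ℝ => Real.exp (-t ^ 2 / 2) :=
  Real.continuous_exp.comp (((continuous_pow 2).neg).div_const 2)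

lemma gauss1d_exp_int : Integrable fun t : ℝ => Real.exp (-t ^ 2 / 2) := by
  have h := integrable_exp_neg_mul_sq (by norm_num : (0 : ℝ) < 1 / 2)
  have heq : (fun t : ℝ => Real.exp (-t ^ 2 / 2)) = fun t : ℝ => Real.exp (-(1 / 2) * t ^ 2) := by
    funext t; congr 1; ring
  rw [heq]; exact h

lemma gauss1d_exp_val : ∫ t : ℝ, Real.exp (-t ^ 2 / 2) = Real.sqrt (2 * π) := by
  have heq : (fun t : ℝ => Real.exp (-t ^ 2 / 2)) = fun t : ℝ => Real.exp (-(1 / 2) * t ^ 2) := by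
    funext t; congr 1; ring
  rw [heq, integral_gaussian]
  congr 1
  ring

lemma gauss1d_max_int : Integrable fun t : ℝ => max t 0 * Real.exp (-t ^ 2 / 2) := by
  have h : Integrable fun t : ℝ => t * Real.exp (-(1 / 2) * t ^ 2) :=
    integrable_mul_exp_neg_mul_sq (by norm_num)
  refine h.abs.mono' ?_ (Filter.Eventually.of_forall fun t => ?_)
  · exact ((continuous_id.max continuous_const).mul continuous_gauss1d).aestronglyMeasurable
  · have he : Real.exp (-t ^ 2 / 2) = Real.exp (-(1 / 2) * t ^ 2) := by congr 1; ring
    have hmx : |max t 0| ≤ |t| := by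
      rw [abs_of_nonneg (le_max_right t 0)]
      exact max_le (le_abs_self t) (abs_nonneg t)
    calc ‖max t 0 * Real.exp (-t ^ 2 / 2)‖
        = |max t 0| * Real.exp (-t ^ 2 / 2) := by
          rw [Real.norm_eq_abs, abs_mul, abs_of_nonneg (Real.exp_pos _).le]
      _ ≤ |t| * Real.exp (-t ^ 2 / 2) :=
          mul_le_mul_of_nonneg_right hmx (Real.exp_pos _).le
      _ = |t * Real.exp (-(1 / 2) * t ^ 2)| := by
          rw [abs_mul, abs_of_nonneg (Real.exp_pos _).le, he]

lemma gauss1d_max_val : ∫ t : ℝ, max t 0 * Real.exp (-t ^ 2 / 2) = 1 := by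
  have hind : (fun t : ℝ => max t 0 * Real.exp (-t ^ 2 / 2))
      = (Set.Ioi (0 : ℝ)).indicator fun t => t * Real.exp (-t ^ 2 / 2) := by
    funext t
    by_cases h : 0 < t
    · rw [Set.indicator_of_mem (Set.mem_Ioi.mpr h), max_eq_left h.le]
    · rw [Set.indicator_of_notMem (by simpa using h), max_eq_right (le_of_not_gt h), zero_mul]
  rw [hind, integral_indicator measurableSet_Ioi]
  have hderiv : ∀ x ∈ Ici (0 : ℝ),
      HasDerivAt (fun t : ℝ => -Real.exp (-t ^ 2 / 2)) (x * Real.exp (-x ^ 2 / 2)) x := by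
    intro x _
    have h1 : HasDerivAt (fun t : ℝ => -t ^ 2 / 2) (-x) x := by
      have h1' : HasDerivAt (fun t : ℝ => -t ^ 2 / 2) (-(((2 : ℕ) : ℝ) * x ^ (2 - 1)) / 2) x :=
        ((hasDerivAt_pow 2 x).neg).div_const 2
      convert h1' using 1
      push_cast
      ring
    have h2 := (Real.hasDerivAt_exp (-x ^ 2 / 2)).comp x h1
    have h3 := h2.neg
    have : -(Real.exp (-x ^ 2 / 2) * -x) = x * Real.exp (-x ^ 2 / 2) := by ring
    rwa [this] at h3
  have htend : Filter.Tendsto (fun t : ℝ => -Real.exp (-t ^ 2 / 2)) Filter.atTop (nhds 0) := by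
    have h1 : Filter.Tendsto (fun t : ℝ => -t ^ 2 / 2) Filter.atTop Filter.atBot := by
      apply Filter.Tendsto.atBot_div_const (by norm_num : (0 : ℝ) < 2)
      exact Filter.tendsto_neg_atBot_iff.mpr (Filter.tendsto_pow_atTop (by norm_num))
    have h2 := Real.tendsto_exp_atBot.comp h1
    simpa using h2.neg
  have hint : IntegrableOn (fun x : ℝ => x * Real.exp (-x ^ 2 / 2)) (Set.Ioi 0) := by
    have heq : (fun x : ℝ => x * Real.exp (-x ^ 2 / 2))
        = fun x : ℝ => x * Real.exp (-(1 / 2) * x ^ 2) := by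
      funext x; congr 2; ring
    rw [heq]
    exact (integrable_mul_exp_neg_mul_sq (by norm_num)).integrableOn
  rw [MeasureTheory.integral_Ioi_of_hasDerivAt_of_tendsto' hderiv hint htend]
  norm_num

/-! ### The `N`-dimensional flux computation -/

/-- The factor functions for the product decomposition of the flux integrand. -/
noncomputable def fluxFactor {N : ℕ} (i0 i : Fin N) (t : ℝ) : ℝ :=
  (if i = i0 then max t 0 else 1) * ((2 * π) ^ (-(1 : ℝ) / 2) * Real.exp (-t ^ 2 / 2))

lemma fluxFactor_int {N : ℕ} (i0 i : Fin N) : Integrable (fluxFactor i0 i) := by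
  by_cases h : i = i0
  · have heq : fluxFactor i0 i = fun t : ℝ =>
        (2 * π) ^ (-(1 : ℝ) / 2) * (max t 0 * Real.exp (-t ^ 2 / 2)) := by
      funext t; simp only [fluxFactor, if_pos h]; ring
    rw [heq]
    exact gauss1d_max_int.const_mul _
  · have heq : fluxFactor i0 i = fun t : ℝ =>
        (2 * π) ^ (-(1 : ℝ) / 2) * Real.exp (-t ^ 2 / 2) := by
      funext t; simp only [fluxFactor, if_neg h, one_mul]
    rw [heq]
    exact gauss1d_exp_int.const_mul _

lemma rpow_neg_half_eq : ((2 * π) ^ (-(1 : ℝ) / 2) : ℝ) = (Real.sqrt (2 * π))⁻¹ := by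
  rw [Real.sqrt_eq_rpow, ← Real.rpow_neg (by positivity)]
  norm_num

lemma fluxFactor_val {N : ℕ} (i0 i : Fin N) :
    ∫ t : ℝ, fluxFactor i0 i t = if i = i0 then (Real.sqrt (2 * π))⁻¹ else 1 := by
  by_cases h : i = i0
  · have heq : fluxFactor i0 i = fun t : ℝ =>
        (2 * π) ^ (-(1 : ℝ) / 2) * (max t 0 * Real.exp (-t ^ 2 / 2)) := by
      funext t; simp only [fluxFactor, if_pos h]; ring
    rw [heq, integral_const_mul, gauss1d_max_val, if_pos h, mul_one,
      rpow_neg_half_eq]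
  · have heq : fluxFactor i0 i = fun t : ℝ =>
        (2 * π) ^ (-(1 : ℝ) / 2) * Real.exp (-t ^ 2 / 2) := by
      funext t; simp only [fluxFactor, if_neg h, one_mul]
    rw [heq, integral_const_mul, gauss1d_exp_val, if_neg h,
      Real.sqrt_eq_rpow, ← Real.rpow_add (by positivity)]
    norm_num

lemma gaussM_nonneg {N : ℕ} (v : EuclideanSpace ℝ (Fin N)) : 0 ≤ gaussM v := by
  unfold gaussM; positivity

lemma continuous_gaussM {N : ℕ} : Continuous (gaussM (N := N)) := by
  unfold gaussM
  exact continuous_const.mul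
    (Real.continuous_exp.comp (((continuous_norm.pow 2).neg).div_const 2))

/-- Integrability and value of the flux integral `∫ (v·n)₊ M(v) dv = 1/√(2π)`. -/
lemma flux_integral {N : ℕ} (n : EuclideanSpace ℝ (Fin N)) (hn : ‖n‖ = 1) :
    Integrable (fun v : EuclideanSpace ℝ (Fin N) => max ⟪v, n⟫ 0 * gaussM v) ∧
    ∫ v : EuclideanSpace ℝ (Fin N), max ⟪v, n⟫ 0 * gaussM v = (Real.sqrt (2 * π))⁻¹ := by
  rcases Nat.eq_zero_or_pos N with hN | hN
  · subst hN
    have : n = 0 := Subsingleton.elim n 0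
    rw [this, norm_zero] at hn
    norm_num at hn
  · set i0 : Fin N := ⟨0, hN⟩ with hi0
    have horth : Orthonormal ℝ (({i0} : Set (Fin N)).restrict fun _ : Fin N => n) := by
      constructor
      · intro i; exact hn
      · intro i j hij
        exfalso
        apply hij
        apply Subtype.ext
        have hi := i.2; have hj := j.2
        rw [Set.mem_singleton_iff] at hi hj
        rw [hi, hj]
    obtain ⟨b, hb⟩ := horth.exists_orthonormalBasis_extension_of_card_eq
      (by simp [finrank_euclideanSpace])
    have hbn : b i0 = n := hb i0 rfl
    have hcoord : ∀ v : EuclideanSpace ℝ (Fin N), ⟪v, n⟫ = b.repr v i0 := by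
      intro v
      rw [b.repr_apply_apply, hbn, real_inner_comm]
    set e : EuclideanSpace ℝ (Fin N) ≃ᵐ (Fin N → ℝ) :=
      b.measurableEquiv.trans ((MeasurableEquiv.toLp 2 (Fin N → ℝ)).symm) with he
    have hMP : MeasurePreserving e volume volume :=
      (EuclideanSpace.volume_preserving_symm_measurableEquiv_toLp (Fin N)).comp
        b.measurePreserving_measurableEquiv
    set F : (Fin N → ℝ) → ℝ := fun y =>
      max (y i0) 0 * ((2 * π) ^ (-(N : ℝ) / 2) * Real.exp (-(∑ i, (y i) ^ 2) / 2)) with hF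
    have hev : ∀ (v : EuclideanSpace ℝ (Fin N)) (i : Fin N), e v i = b.repr v i := by
      intro v i; rfl
    have hFeq : ∀ v : EuclideanSpace ℝ (Fin N), max ⟪v, n⟫ 0 * gaussM v = F (e v) := by
      intro v
      have hnorm : ‖v‖ ^ 2 = ∑ i, (e v i) ^ 2 := by
        have h1 : ‖v‖ = ‖b.repr v‖ := (b.repr.norm_map v).symm
        rw [h1, EuclideanSpace.norm_eq, Real.sq_sqrt (by positivity)]
        refine Finset.sum_congr rfl fun i _ => ?_
        rw [Real.norm_eq_abs, sq_abs, hev]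
      simp only [hF, gaussM, hcoord v, hnorm, hev]
    have hFprod : F = fun y => ∏ i, fluxFactor i0 i (y i) := by
      funext y
      have hcoef : ((2 * π) ^ (-(1 : ℝ) / 2)) ^ (Finset.univ : Finset (Fin N)).card
          = (2 * π) ^ (-(N : ℝ) / 2) := by
        rw [Finset.card_univ, Fintype.card_fin,
          ← Real.rpow_natCast ((2 * π) ^ (-(1 : ℝ) / 2)) N, ← Real.rpow_mul (by positivity)]
        congr 1
        ring
      have hexp : ∑ i, (-(y i) ^ 2 / 2) = -(∑ i, (y i) ^ 2) / 2 := by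
        rw [← Finset.sum_div, ← Finset.sum_neg_distrib]
      simp only [fluxFactor]
      rw [Finset.prod_mul_distrib, Finset.prod_ite_eq' Finset.univ i0 fun i => max (y i) 0,
        Finset.prod_mul_distrib, Finset.prod_const, hcoef, ← Real.exp_sum, hexp]
      simp [hF]
    have hFint : Integrable F := by
      rw [hFprod]
      exact Integrable.fintype_prod fun i => fluxFactor_int i0 i
    have hFval : ∫ y, F y = (Real.sqrt (2 * π))⁻¹ := by
      rw [hFprod]; beta_reduce; rw [MeasureTheory.volume_pi, MeasureTheory.integral_fintype_prod_eq_prod (fluxFactor i0)]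
      have : ∀ i, ∫ t : ℝ, fluxFactor i0 i t
          = if i = i0 then (Real.sqrt (2 * π))⁻¹ else 1 := fluxFactor_val i0
      rw [Finset.prod_congr rfl fun i _ => this i,
        Finset.prod_ite_eq' Finset.univ i0 fun _ => (Real.sqrt (2 * π))⁻¹]
      simp
    constructor
    · have : Integrable (F ∘ e) := (hMP.integrable_comp_emb e.measurableEmbedding).mpr hFint
      refine this.congr (Filter.Eventually.of_forall fun v => ?_)
      exact (hFeq v).symm
    · calc ∫ v, max ⟪v, n⟫ 0 * gaussM v = ∫ v, F (e v) := by
            exact integral_congr_ae (Filter.Eventually.of_forall hFeq)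
        _ = ∫ y, F y := hMP.integral_comp' F
        _ = (Real.sqrt (2 * π))⁻¹ := hFval

/-! ### The main theorem -/

/-- Estimate of the large-deviation part of the outgoing mass flux by the
Darrozes-Guiraud information:
`Λ_n(G) ∫ 1_{|G/Λ_n(G) − 1| > η} min((v·n)₊², 1) M dv
  ≤ (1/(√(2π) h(η))) (Λ_n(h(G−1)) − h(Λ_n(G) − 1))`. -/
theorem large_deviation_part_of_mass_flux {N : ℕ}
    (n : EuclideanSpace ℝ (Fin N)) (hn : ‖n‖ = 1)
    (η : ℝ) (hη : η ∈ Set.Ioo (0 : ℝ) 1)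
    (G : EuclideanSpace ℝ (Fin N) → ℝ) (hGmeas : Measurable G)
    (hGnonneg : ∀ v, 0 ≤ G v)
    (hGint : Integrable fun v => G v * max ⟪v, n⟫ 0 * gaussM v)
    (hhGint : Integrable fun v => entH (G v - 1) * max ⟪v, n⟫ 0 * gaussM v)
    (hGpos : 0 < Lam n G) :
    Lam n G *
        ∫ v, (if η < |G v / Lam n G - 1| then (1 : ℝ) else 0) *
          min ((max ⟪v, n⟫ 0) ^ 2) 1 * gaussM v
      ≤ (1 / (Real.sqrt (2 * π) * entH η)) *
          (Lam n (fun v => entH (G v - 1)) - entH (Lam n G - 1)) := by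
  obtain ⟨hwint, hwval⟩ := flux_integral n hn
  set lam := Lam n G with hlam
  have hs : (0 : ℝ) < Real.sqrt (2 * π) := Real.sqrt_pos.mpr (by positivity)
  have hηe : 0 < entH η := entH_pos hη.1
  -- normalized hypotheses
  have hGw : Integrable fun v => G v * (max ⟪v, n⟫ 0 * gaussM v) := by
    have := hGint; simp only [mul_assoc] at this; exact this
  have hhGw : Integrable fun v => entH (G v - 1) * (max ⟪v, n⟫ 0 * gaussM v) := by
    have := hhGint; simp only [mul_assoc] at this; exact this
  have hGI : ∫ v, G v * (max ⟪v, n⟫ 0 * gaussM v) = lam / Real.sqrt (2 * π) := by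
    rw [hlam, Lam, mul_comm, mul_div_assoc, div_self (ne_of_gt hs), mul_one]
    simp only [mul_assoc]
  -- identity for the right-hand side integrand
  have hfun : (fun v => lam * entH (G v / lam - 1) * (max ⟪v, n⟫ 0 * gaussM v))
      = fun v => entH (G v - 1) * (max ⟪v, n⟫ 0 * gaussM v)
          - Real.log lam * (G v * (max ⟪v, n⟫ 0 * gaussM v))
          - (1 - lam) * (max ⟪v, n⟫ 0 * gaussM v) := by
    funext v
    have := entH_scaling hGpos (hGnonneg v)
    calc lam * entH (G v / lam - 1) * (max ⟪v, n⟫ 0 * gaussM v)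
        = (entH (G v - 1) - G v * Real.log lam - 1 + lam) * (max ⟪v, n⟫ 0 * gaussM v) := by
          rw [this]
      _ = _ := by ring
  have hRint : Integrable fun v => lam * entH (G v / lam - 1) * (max ⟪v, n⟫ 0 * gaussM v) := by
    rw [hfun]
    exact (hhGw.sub (hGw.const_mul _)).sub (hwint.const_mul _)
  have hf1 : Integrable fun v => entH (G v - 1) * (max ⟪v, n⟫ 0 * gaussM v)
      - Real.log lam * (G v * (max ⟪v, n⟫ 0 * gaussM v)) := hhGw.sub (hGw.const_mul _)
  have hK : ∫ v, lam * entH (G v / lam - 1) * (max ⟪v, n⟫ 0 * gaussM v)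
      = (∫ v, entH (G v - 1) * (max ⟪v, n⟫ 0 * gaussM v))
        - Real.log lam * (lam / Real.sqrt (2 * π))
        - (1 - lam) * (Real.sqrt (2 * π))⁻¹ := by
    rw [hfun, integral_sub hf1 (hwint.const_mul _),
      integral_sub hhGw (hGw.const_mul _), integral_const_mul,
      integral_const_mul, hGI, hwval]
  -- measurability of the left integrand
  have hinnC : Continuous fun v : EuclideanSpace ℝ (Fin N) => ⟪v, n⟫ :=
    continuous_id.inner continuous_const
  have hminC : Continuous fun v : EuclideanSpace ℝ (Fin N) =>
      min ((max ⟪v, n⟫ 0) ^ 2) 1 :=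
    ((hinnC.max continuous_const).pow 2).min continuous_const
  have hindmeas : Measurable fun v : EuclideanSpace ℝ (Fin N) =>
      (if η < |G v / lam - 1| then (1 : ℝ) else 0) := by
    apply Measurable.ite _ measurable_const measurable_const
    exact measurableSet_lt measurable_const ((hGmeas.div_const lam).sub measurable_const).abs
  have hLmeas : AEStronglyMeasurable (fun v : EuclideanSpace ℝ (Fin N) =>
      lam * ((if η < |G v / lam - 1| then (1 : ℝ) else 0) *
        min ((max ⟪v, n⟫ 0) ^ 2) 1 * gaussM v)) volume :=
    ((measurable_const.mul ((hindmeas.mul hminC.measurable).mul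
      continuous_gaussM.measurable))).aestronglyMeasurable
  -- pointwise facts
  have hmin_le : ∀ v : EuclideanSpace ℝ (Fin N),
      min ((max ⟪v, n⟫ 0) ^ 2) 1 ≤ max ⟪v, n⟫ 0 := by
    intro v
    set p := max ⟪v, n⟫ 0 with hp
    have hp0 : 0 ≤ p := le_max_right _ _
    rcases le_total p 1 with h | h
    · exact le_trans (min_le_left _ _) (by nlinarith)
    · exact le_trans (min_le_right _ _) h
  have hind_le : ∀ v : EuclideanSpace ℝ (Fin N),
      (if η < |G v / lam - 1| then (1 : ℝ) else 0) ≤ 1 := by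
    intro v; split <;> norm_num
  have hind_nonneg : ∀ v : EuclideanSpace ℝ (Fin N),
      0 ≤ (if η < |G v / lam - 1| then (1 : ℝ) else 0) := by
    intro v; split <;> norm_num
  have hz : ∀ v, (-1 : ℝ) ≤ G v / lam - 1 := by
    intro v
    have : 0 ≤ G v / lam := div_nonneg (hGnonneg v) hGpos.le
    linarith
  -- integrability of the left integrand
  have hLint : Integrable fun v : EuclideanSpace ℝ (Fin N) =>
      lam * ((if η < |G v / lam - 1| then (1 : ℝ) else 0) *
        min ((max ⟪v, n⟫ 0) ^ 2) 1 * gaussM v) := by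
    refine (hwint.const_mul lam).mono' hLmeas (Filter.Eventually.of_forall fun v => ?_)
    have hg0 := gaussM_nonneg v
    have hp0 : (0 : ℝ) ≤ max ⟪v, n⟫ 0 := le_max_right _ _
    have hmin0 : 0 ≤ min ((max ⟪v, n⟫ 0) ^ 2) 1 := le_min (by positivity) zero_le_one
    have h1 : 0 ≤ (if η < |G v / lam - 1| then (1 : ℝ) else 0) *
        min ((max ⟪v, n⟫ 0) ^ 2) 1 * gaussM v :=
      mul_nonneg (mul_nonneg (hind_nonneg v) hmin0) hg0
    rw [Real.norm_eq_abs, abs_of_nonneg (mul_nonneg hGpos.le h1)]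
    have h2 : (if η < |G v / lam - 1| then (1 : ℝ) else 0) *
        min ((max ⟪v, n⟫ 0) ^ 2) 1 * gaussM v ≤ max ⟪v, n⟫ 0 * gaussM v := by
      have := hmin_le v
      have h3 : (if η < |G v / lam - 1| then (1 : ℝ) else 0) *
          min ((max ⟪v, n⟫ 0) ^ 2) 1 ≤ min ((max ⟪v, n⟫ 0) ^ 2) 1 := by
        nth_rewrite 2 [← one_mul (min ((max ⟪v, n⟫ 0) ^ 2) 1)]
        exact mul_le_mul_of_nonneg_right (hind_le v) hmin0
      exact mul_le_mul_of_nonneg_right (le_trans h3 this) hg0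
    exact mul_le_mul_of_nonneg_left h2 hGpos.le
  -- pointwise inequality
  have hpt : ∀ v : EuclideanSpace ℝ (Fin N),
      lam * ((if η < |G v / lam - 1| then (1 : ℝ) else 0) *
        min ((max ⟪v, n⟫ 0) ^ 2) 1 * gaussM v)
      ≤ (entH η)⁻¹ * (lam * entH (G v / lam - 1) * (max ⟪v, n⟫ 0 * gaussM v)) := by
    intro v
    set p := max ⟪v, n⟫ 0 with hp
    set g := gaussM v with hg
    set z := G v / lam - 1 with hzv
    have hp0 : (0 : ℝ) ≤ p := le_max_right _ _
    have hg0 : 0 ≤ g := gaussM_nonneg v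
    have hz1 : (-1 : ℝ) ≤ z := hz v
    by_cases hind : η < |z|
    · rw [if_pos hind, one_mul]
      have h2 : entH η ≤ entH z := entH_ge_of_abs_gt hη hz1 hind
      calc lam * (min (p ^ 2) 1 * g) ≤ lam * (p * g) :=
            mul_le_mul_of_nonneg_left (mul_le_mul_of_nonneg_right (hmin_le v) hg0) hGpos.le
        _ = (entH η)⁻¹ * (lam * entH η * (p * g)) := by
            rw [show (entH η)⁻¹ * (lam * entH η * (p * g))
              = (entH η * (entH η)⁻¹) * (lam * (p * g)) by ring,
              mul_inv_cancel₀ (ne_of_gt hηe), one_mul]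
        _ ≤ (entH η)⁻¹ * (lam * entH z * (p * g)) := by
            apply mul_le_mul_of_nonneg_left _ (inv_nonneg.2 hηe.le)
            exact mul_le_mul_of_nonneg_right
              (mul_le_mul_of_nonneg_left h2 hGpos.le) (mul_nonneg hp0 hg0)
    · rw [if_neg hind, zero_mul, zero_mul, mul_zero]
      exact mul_nonneg (inv_nonneg.2 hηe.le)
        (mul_nonneg (mul_nonneg hGpos.le (entH_nonneg hz1)) (mul_nonneg hp0 hg0))
  -- put everything together
  have hmono := MeasureTheory.integral_mono hLint (hRint.const_mul ((entH η)⁻¹)) hpt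
  rw [integral_const_mul, integral_const_mul, hK] at hmono
  calc lam * ∫ v, (if η < |G v / lam - 1| then (1 : ℝ) else 0) *
          min ((max ⟪v, n⟫ 0) ^ 2) 1 * gaussM v
      ≤ (entH η)⁻¹ * ((∫ v, entH (G v - 1) * (max ⟪v, n⟫ 0 * gaussM v))
          - Real.log lam * (lam / Real.sqrt (2 * π))
          - (1 - lam) * (Real.sqrt (2 * π))⁻¹) := hmono
    _ = (1 / (Real.sqrt (2 * π) * entH η)) *
          (Lam n (fun v => entH (G v - 1)) - entH (lam - 1)) := by
        rw [Lam]
        have hJ : (∫ v, entH (G v - 1) * max ⟪v, n⟫ 0 * gaussM v)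
            = ∫ v, entH (G v - 1) * (max ⟪v, n⟫ 0 * gaussM v) := by
          simp only [mul_assoc]
        rw [hJ]
        have hent : entH (lam - 1) = lam * Real.log lam - lam + 1 := by
          simp only [entH, show (1 : ℝ) + (lam - 1) = lam by ring]
          ring
        rw [hent]
        field_simp
        ring
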